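/- Let Δ = Δ_0 + Δ_1 + ⋯ + Δ_k be a Minkowski sum decomposition of a reflexive polytope Δ ⊂ ℝ^d into lattice polytopes and σ̄ ⊂ ℝ^d ⊕ ℝ^{k+1} the Cayley cone. Then the dual cone satisfies σ̄∨ = ℝ_{≥0} · Conv({u − Σ_{i=0}^k min⟨Δ_i, u⟩ · r_i* : u ∈ Δ*} ∪ {r_0*, …, r_k*}). -/

import Mathlib

open scoped Pointwise
open Set

noncomputable section

/-- The standard pairing on `ℝ^n`. -/
def pairing {n : ℕ} (x y : Fin n → ℝ) : ℝ := ∑ i, x i * y i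

/-- A point of `ℝ^n` lying in the lattice `ℤ^n`. -/
def IsLatticePt {n : ℕ} (x : Fin n → ℝ) : Prop := ∀ i, ∃ z : ℤ, x i = (z : ℝ)

/-- A lattice polytope: the convex hull of finitely many lattice points. -/
def IsLatticePolytope {n : ℕ} (P : Set (Fin n → ℝ)) : Prop :=
  ∃ S : Set (Fin n → ℝ), S.Finite ∧ (∀ x ∈ S, IsLatticePt x) ∧ P = convexHull ℝ S

/-- The dual polytope `P* = {y | ⟨x,y⟩ ≥ -1 ∀ x ∈ P}`. -/
def polarDual {n : ℕ} (P : Set (Fin n → ℝ)) : Set (Fin n → ℝ) :=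
  {y | ∀ x ∈ P, -1 ≤ pairing x y}

/-- A reflexive polytope. -/
def IsReflexive {n : ℕ} (P : Set (Fin n → ℝ)) : Prop :=
  IsLatticePolytope P ∧ (0 : Fin n → ℝ) ∈ interior P ∧ IsLatticePolytope (polarDual P)

/-- `min⟨P, u⟩ = min_{x ∈ P} ⟨x, u⟩`. -/
def minPair {n : ℕ} (P : Set (Fin n → ℝ)) (u : Fin n → ℝ) : ℝ :=
  sInf ((fun x => pairing x u) '' P)

/-- The real vector space `ℝ^d ⊕ ℝ^k`. -/
abbrev Vdk (d k : ℕ) := (Fin d → ℝ) × (Fin k → ℝ)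

/-- The pairing on `ℝ^d ⊕ ℝ^k` (sum of the two standard pairings). -/
def pairingV {d k : ℕ} (x y : Vdk d k) : ℝ := pairing x.1 y.1 + pairing x.2 y.2

def IsLatticePtV {d k : ℕ} (x : Vdk d k) : Prop := IsLatticePt x.1 ∧ IsLatticePt x.2

def IsLatticePolytopeV {d k : ℕ} (P : Set (Vdk d k)) : Prop :=
  ∃ S : Set (Vdk d k), S.Finite ∧ (∀ x ∈ S, IsLatticePtV x) ∧ P = convexHull ℝ S

def polarDualV {d k : ℕ} (P : Set (Vdk d k)) : Set (Vdk d k) :=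
  {y | ∀ x ∈ P, -1 ≤ pairingV x y}

def IsReflexiveV {d k : ℕ} (P : Set (Vdk d k)) : Prop :=
  IsLatticePolytopeV P ∧ (0 : Vdk d k) ∈ interior P ∧ IsLatticePolytopeV (polarDualV P)

/-- The Cayley cone `σ̄ = {(t₀Δ₀ + ⋯ + t_kΔ_k, t₀, …, t_k) : tᵢ ≥ 0} ⊆ ℝ^d ⊕ ℝ^{k+1}`. -/
def cayleyCone {d k : ℕ} (Δ : Fin (k+1) → Set (Fin d → ℝ)) : Set (Vdk d (k+1)) :=
  {p | (∀ i, 0 ≤ p.2 i) ∧ p.1 ∈ ∑ i, p.2 i • Δ i}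

/-- The dual cone of a cone in `ℝ^d ⊕ ℝ^k`. -/
def dualConeV {d k : ℕ} (σ : Set (Vdk d k)) : Set (Vdk d k) :=
  {y | ∀ x ∈ σ, 0 ≤ pairingV x y}

section Helpers

lemma pairing_add_left {n : ℕ} (x y z : Fin n → ℝ) :
    pairing (x + y) z = pairing x z + pairing y z := by
  simp [pairing, add_mul, Finset.sum_add_distrib]

lemma pairing_add_right {n : ℕ} (x y z : Fin n → ℝ) :
    pairing x (y + z) = pairing x y + pairing x z := by
  simp [pairing, mul_add, Finset.sum_add_distrib]

lemma pairing_smul_left {n : ℕ} (c : ℝ) (x y : Fin n → ℝ) :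
    pairing (c • x) y = c * pairing x y := by
  simp only [pairing, Pi.smul_apply, smul_eq_mul, Finset.mul_sum]
  exact Finset.sum_congr rfl fun i _ => by ring

lemma pairing_smul_right {n : ℕ} (c : ℝ) (x y : Fin n → ℝ) :
    pairing x (c • y) = c * pairing x y := by
  simp only [pairing, Pi.smul_apply, smul_eq_mul, Finset.mul_sum]
  exact Finset.sum_congr rfl fun i _ => by ring

lemma pairing_zero_left {n : ℕ} (x : Fin n → ℝ) : pairing 0 x = 0 := by
  simp [pairing]

lemma pairing_zero_right {n : ℕ} (x : Fin n → ℝ) : pairing x 0 = 0 := by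
  simp [pairing]

lemma pairing_sum_left {n : ℕ} {ι : Type*} (s : Finset ι) (f : ι → Fin n → ℝ)
    (y : Fin n → ℝ) : pairing (∑ i ∈ s, f i) y = ∑ i ∈ s, pairing (f i) y := by
  simp only [pairing, Finset.sum_apply, Finset.sum_mul]
  exact Finset.sum_comm

lemma pairing_single_left {n : ℕ} (i : Fin n) (t : Fin n → ℝ) :
    pairing (Pi.single i 1) t = t i := by
  simp [pairing, Pi.single_apply]

lemma pairing_single_right {n : ℕ} (i : Fin n) (t : Fin n → ℝ) :
    pairing t (Pi.single i 1) = t i := by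
  simp [pairing, Pi.single_apply]

lemma pairingV_add_right {d k : ℕ} (x y z : Vdk d k) :
    pairingV x (y + z) = pairingV x y + pairingV x z := by
  simp only [pairingV, Prod.fst_add, Prod.snd_add, pairing_add_right]
  ring

lemma pairingV_smul_right {d k : ℕ} (c : ℝ) (x y : Vdk d k) :
    pairingV x (c • y) = c * pairingV x y := by
  simp only [pairingV, Prod.smul_fst, Prod.smul_snd, pairing_smul_right]
  ring

end Helpers
/-- the dual of the Cayley cone is the cone over the convex hull of
`{u − Σᵢ min⟨Δᵢ,u⟩ rᵢ* : u ∈ Δ*} ∪ {r₀*, …, r_k*}`. -/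
theorem dual_cayleyCone_eq {d k : ℕ}
    (Δ : Fin (k+1) → Set (Fin d → ℝ))
    (hlat : ∀ i, IsLatticePolytope (Δ i))
    (hrefl : IsReflexive (∑ i, Δ i)) :
    dualConeV (cayleyCone Δ) =
      {y : Vdk d (k+1) | ∃ t : ℝ, 0 ≤ t ∧ ∃ x ∈ convexHull ℝ
        ((fun u => ((u, fun i => -(minPair (Δ i) u)) : Vdk d (k+1))) ''
            polarDual (∑ i, Δ i) ∪
          ⋃ i : Fin (k+1), {(((0 : Fin d → ℝ), Pi.single i 1) : Vdk d (k+1))}),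
        y = t • x} := by
  classical
  obtain ⟨-, h0int, -⟩ := hrefl
  have h0mem : (0 : Fin d → ℝ) ∈ ∑ i, Δ i := interior_subset h0int
  obtain ⟨g0, hg0, hg0sum⟩ := (Set.mem_fintype_sum _ _).1 h0mem
  have hne : ∀ i, (Δ i).Nonempty := fun i => ⟨g0 i, hg0 i⟩
  have hbdd : ∀ (i : Fin (k+1)) (u : Fin d → ℝ),
      BddBelow ((fun x => pairing x u) '' Δ i) := by
    intro i u
    obtain ⟨S, hSfin, -, hSeq⟩ := hlat i
    have hcont : Continuous fun x : Fin d → ℝ => pairing x u := by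
      unfold pairing
      exact continuous_finset_sum _ fun j _ => (continuous_apply j).mul continuous_const
    have hK : IsCompact (Δ i) := hSeq ▸ hSfin.isCompact_convexHull ℝ
    exact (hK.image hcont).bddBelow
  have hle : ∀ (i : Fin (k+1)) (u x : Fin d → ℝ), x ∈ Δ i →
      minPair (Δ i) u ≤ pairing x u := fun i u x hx => csInf_le (hbdd i u) ⟨x, hx, rfl⟩
  have hge : ∀ (i : Fin (k+1)) (u : Fin d → ℝ) (b : ℝ),
      (∀ x ∈ Δ i, b ≤ pairing x u) → b ≤ minPair (Δ i) u := by
    intro i u b hb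
    exact le_csInf ((hne i).image _) (by rintro r ⟨x, hx, rfl⟩; exact hb x hx)
  have hm0 : ∀ i, minPair (Δ i) (0 : Fin d → ℝ) = 0 := by
    intro i
    refine le_antisymm ?_ (hge i 0 0 fun x _ => by simp [pairing])
    simpa [pairing] using hle i 0 (g0 i) (hg0 i)
  have hhom : ∀ (i : Fin (k+1)) (c : ℝ), 0 < c → ∀ u,
      minPair (Δ i) (c • u) = c * minPair (Δ i) u := by
    intro i c hc u
    refine le_antisymm ?_ ?_
    · have h1 : c⁻¹ * minPair (Δ i) (c • u) ≤ minPair (Δ i) u := by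
        refine hge i u _ fun x hx => ?_
        have h2 := hle i (c • u) x hx
        rw [pairing_smul_right] at h2
        calc c⁻¹ * minPair (Δ i) (c • u) ≤ c⁻¹ * (c * pairing x u) :=
              mul_le_mul_of_nonneg_left h2 (by positivity)
          _ = pairing x u := by field_simp
      calc minPair (Δ i) (c • u) = c * (c⁻¹ * minPair (Δ i) (c • u)) := by field_simp
        _ ≤ c * minPair (Δ i) u := mul_le_mul_of_nonneg_left h1 hc.le
    · refine hge i (c • u) _ fun x hx => ?_
      rw [pairing_smul_right]
      exact mul_le_mul_of_nonneg_left (hle i u x hx) hc.le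
  have hdual_pair : ∀ y p : Vdk d (k+1), (∀ i, 0 ≤ minPair (Δ i) y.1 + y.2 i) →
      p ∈ cayleyCone Δ → 0 ≤ pairingV p y := by
    intro y p hy hp
    obtain ⟨hpt, hpx⟩ := hp
    obtain ⟨gg, hgg, hggsum⟩ := (Set.mem_fintype_sum _ _).1 hpx
    choose z hz hzeq using fun i => Set.mem_smul_set.1 (hgg i)
    have h1 : pairing p.1 y.1 = ∑ i, p.2 i * pairing (z i) y.1 := by
      rw [← hggsum, pairing_sum_left]
      exact Finset.sum_congr rfl fun i _ => by rw [← hzeq i, pairing_smul_left]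
    have h2 : pairingV p y = ∑ i, (p.2 i * pairing (z i) y.1 + p.2 i * y.2 i) := by
      simp only [pairingV]
      rw [h1, Finset.sum_add_distrib]
      rfl
    rw [h2]
    refine Finset.sum_nonneg fun i _ => ?_
    rw [← mul_add]
    refine mul_nonneg (hpt i) ?_
    have h3 := hle i y.1 (z i) (hz i)
    have h4 := hy i
    linarith
  have hcond : ∀ y : Vdk d (k+1), (∀ p ∈ cayleyCone Δ, 0 ≤ pairingV p y) →
      ∀ i, 0 ≤ minPair (Δ i) y.1 + y.2 i := by
    intro y hy i
    have hz : ∀ z ∈ Δ i, ((z, Pi.single i 1) : Vdk d (k+1)) ∈ cayleyCone Δ := by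
      intro z hzmem
      refine ⟨?_, ?_⟩
      · intro j
        rcases eq_or_ne j i with h | h
        · subst h; simp
        · simp [Pi.single_eq_of_ne h]
      · refine (Set.mem_fintype_sum _ _).2
          ⟨fun j => if j = i then z else 0, fun j => ?_, ?_⟩
        · rcases eq_or_ne j i with h | h
          · subst h
            refine Set.mem_smul_set.2 ⟨z, hzmem, ?_⟩
            simp
          · refine Set.mem_smul_set.2 ⟨g0 j, hg0 j, ?_⟩
            simp [Pi.single_eq_of_ne h, h]
        · simp
    have hb : ∀ z ∈ Δ i, -(y.2 i) ≤ pairing z y.1 := by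
      intro z hzm
      have h := hy _ (hz z hzm)
      simp only [pairingV, pairing_single_left] at h
      linarith
    have := hge i y.1 _ hb
    linarith
  ext y
  simp only [dualConeV, Set.mem_setOf_eq]
  constructor
  · -- dual cone ⊆ cone over hull
    intro hy
    obtain ⟨u, s⟩ := y
    have hc : ∀ i, 0 ≤ minPair (Δ i) u + s i := hcond (u, s) hy
    set lam : ℝ := -∑ i, minPair (Δ i) u with hlamdef
    have hlam0 : 0 ≤ lam := by
      have h1 : ∑ i, minPair (Δ i) u ≤ ∑ i, pairing (g0 i) u :=
        Finset.sum_le_sum fun i _ => hle i u (g0 i) (hg0 i)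
      have h2 : ∑ i, pairing (g0 i) u = 0 := by
        rw [← pairing_sum_left, hg0sum, pairing_zero_left]
      rw [hlamdef]; linarith
    have hu0 : lam = 0 → u = 0 := by
      intro h0
      by_contra hu
      rw [mem_interior_iff_mem_nhds] at h0int
      obtain ⟨ε, hε, hball⟩ := Metric.mem_nhds_iff.1 h0int
      have hnu : 0 < ‖u‖ := norm_pos_iff.2 hu
      set c : ℝ := ε / (2 * ‖u‖) with hcdef
      have hcpos : 0 < c := by positivity
      have hmemball : -(c • u) ∈ Metric.ball (0 : Fin d → ℝ) ε := by
        rw [mem_ball_zero_iff, norm_neg, norm_smul, Real.norm_of_nonneg hcpos.le]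
        have hcu : c * ‖u‖ = ε / 2 := by
          rw [hcdef]; field_simp
        rw [hcu]; linarith
      have hmemΔ : -(c • u) ∈ ∑ i, Δ i := hball hmemball
      obtain ⟨w, hw, hwsum⟩ := (Set.mem_fintype_sum _ _).1 hmemΔ
      have h1 : ∑ i, minPair (Δ i) u ≤ pairing (-(c • u)) u := by
        calc ∑ i, minPair (Δ i) u ≤ ∑ i, pairing (w i) u :=
              Finset.sum_le_sum fun i _ => hle i u (w i) (hw i)
          _ = pairing (-(c • u)) u := by rw [← pairing_sum_left, hwsum]
      have h2 : pairing (-(c • u)) u = -(c * pairing u u) := by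
        rw [show -(c • u) = (-c) • u by rw [neg_smul], pairing_smul_left]; ring
      have h3 : 0 < pairing u u := by
        show 0 < ∑ i, u i * u i
        obtain ⟨j, hj⟩ := Function.ne_iff.1 hu
        refine Finset.sum_pos' (fun i _ => mul_self_nonneg _) ⟨j, Finset.mem_univ j, ?_⟩
        exact mul_self_pos.2 (by simpa using hj)
      have h4 : ∑ i, minPair (Δ i) u = 0 := by
        rw [hlamdef] at h0; linarith
      nlinarith
    set u' : Fin d → ℝ := lam⁻¹ • u with hu'def
    have hu' : u' ∈ polarDual (∑ i, Δ i) := by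
      intro x hx
      obtain ⟨w, hw, hwsum⟩ := (Set.mem_fintype_sum _ _).1 hx
      have h1 : -lam ≤ pairing x u := by
        have hs : ∑ i, minPair (Δ i) u ≤ ∑ i, pairing (w i) u :=
          Finset.sum_le_sum fun i _ => hle i u (w i) (hw i)
        have h2 : ∑ i, pairing (w i) u = pairing x u := by
          rw [← pairing_sum_left, hwsum]
        rw [hlamdef]; linarith
      rw [hu'def, pairing_smul_right]
      rcases eq_or_lt_of_le hlam0 with h0 | h0
      · rw [← h0]; norm_num
      · have h2 := mul_le_mul_of_nonneg_left h1 (inv_nonneg.2 hlam0)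
        have h3 : lam⁻¹ * -lam = -1 := by field_simp
        linarith
    set g : Vdk d (k+1) := (u', fun i => -(minPair (Δ i) u')) with hgdef
    set b : Fin (k+1) → Vdk d (k+1) := fun i => (0, Pi.single i 1) with hbdef
    set cc : Fin (k+1) → ℝ := fun i => s i + minPair (Δ i) u with hccdef
    have hccnn : ∀ i, 0 ≤ cc i := by
      intro i; rw [hccdef]; have := hc i; simp only; linarith
    have hkey : ((u, s) : Vdk d (k+1)) = lam • g + ∑ i, cc i • b i := by
      have hfst : (∑ i, cc i • b i).1 = 0 := by
        rw [Prod.fst_sum]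
        simp [hbdef]
      have hsnd : (∑ i, cc i • b i).2 = cc := by
        rw [Prod.snd_sum]
        funext j
        rw [Finset.sum_apply]
        simp [hbdef, Pi.single_apply]
      rw [Prod.ext_iff]
      constructor
      · simp only [Prod.fst_add, Prod.smul_fst, hfst, add_zero, hgdef]
        rcases eq_or_lt_of_le hlam0 with h0 | h0
        · rw [← h0, zero_smul, hu0 h0.symm]
        · rw [hu'def, smul_smul, mul_inv_cancel₀ h0.ne', one_smul]
      · simp only [Prod.snd_add, Prod.smul_snd, hsnd]
        funext j
        simp only [Pi.add_apply, Pi.smul_apply, smul_eq_mul, hgdef]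
        have hmu' : lam * minPair (Δ j) u' = minPair (Δ j) u := by
          rcases eq_or_lt_of_le hlam0 with h0 | h0
          · rw [← h0, zero_mul, hu0 h0.symm, hm0 j]
          · rw [hu'def, hhom j lam⁻¹ (inv_pos.2 h0) u]
            field_simp
        rw [mul_neg, hmu', hccdef]
        simp only
        ring
      -- end hkey
    set t : ℝ := lam + ∑ i, cc i with htdef
    have ht0 : 0 ≤ t := by
      rw [htdef]
      have := Finset.sum_nonneg (fun i (_ : i ∈ Finset.univ) => hccnn i)
      linarith
    rcases eq_or_lt_of_le ht0 with ht | ht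
    · -- t = 0 : y = 0
      have hsum0 : ∑ i, cc i = 0 := by
        have := Finset.sum_nonneg (fun i (_ : i ∈ Finset.univ) => hccnn i)
        rw [htdef] at ht; linarith
      have hlamz : lam = 0 := by rw [htdef] at ht; linarith
      have hccz : ∀ i, cc i = 0 := fun i =>
        (Finset.sum_eq_zero_iff_of_nonneg (fun i _ => hccnn i)).1 hsum0 i (Finset.mem_univ i)
      have huz : u = 0 := hu0 hlamz
      refine ⟨0, le_refl 0, (0, Pi.single 0 1),
        subset_convexHull ℝ _ (Set.mem_union_right _ (Set.mem_iUnion.2 ⟨0, rfl⟩)), ?_⟩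
      rw [zero_smul, Prod.ext_iff]
      refine ⟨huz, funext fun j => ?_⟩
      have := hccz j
      rw [hccdef] at this
      simp only at this
      rw [huz, hm0 j] at this
      simpa using this
    · -- t > 0
      refine ⟨t, ht0, (lam / t) • g + ∑ i, (cc i / t) • b i, ?_, ?_⟩
      · rw [show (lam / t) • g + ∑ i, (cc i / t) • b i =
            ∑ j : Option (Fin (k+1)),
              (j.elim (lam / t) fun i => cc i / t) • j.elim g b from
          (Fintype.sum_option
            (f := fun j => (j.elim (lam / t) fun i => cc i / t) • j.elim g b)).symm]
        refine (convex_convexHull ℝ _).sum_mem (fun j _ => ?_) ?_ (fun j _ => ?_)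
        · cases j with
          | none => exact div_nonneg hlam0 ht0
          | some i => exact div_nonneg (hccnn i) ht0
        · rw [Fintype.sum_option
            (f := fun j : Option (Fin (k+1)) => (j.elim (lam / t) fun i => cc i / t))]
          simp only [Option.elim]
          rw [← Finset.sum_div, ← add_div, ← htdef, div_self ht.ne']
        · cases j with
          | none =>
            exact subset_convexHull ℝ _ (Set.mem_union_left _ ⟨u', hu', rfl⟩)
          | some i =>
            exact subset_convexHull ℝ _
              (Set.mem_union_right _ (Set.mem_iUnion.2 ⟨i, rfl⟩))
      · rw [hkey, smul_add, smul_smul, Finset.smul_sum]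
        congr 1
        · rw [mul_comm, div_mul_cancel₀ _ ht.ne']
        · refine Finset.sum_congr rfl fun i _ => ?_
          rw [smul_smul, mul_comm, div_mul_cancel₀ _ ht.ne']
  · -- cone over hull ⊆ dual cone
    rintro ⟨t, htnn, x, hx, rfl⟩
    intro p hp
    rw [pairingV_smul_right]
    refine mul_nonneg htnn ?_
    have hG : ∀ w ∈ ((fun u => ((u, fun i => -(minPair (Δ i) u)) : Vdk d (k+1))) ''
            polarDual (∑ i, Δ i) ∪
          ⋃ i : Fin (k+1), {(((0 : Fin d → ℝ), Pi.single i 1) : Vdk d (k+1))}),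
        0 ≤ pairingV p w := by
      rintro w (⟨u, hu, rfl⟩ | hw)
      · exact hdual_pair _ p (fun i => by simp) hp
      · simp only [Set.mem_iUnion, Set.mem_singleton_iff] at hw
        obtain ⟨i, rfl⟩ := hw
        simp only [pairingV, pairing_zero_right, pairing_single_right]
        have := hp.1 i
        linarith
    have hconv : Convex ℝ {w : Vdk d (k+1) | 0 ≤ pairingV p w} := by
      intro w₁ h₁ w₂ h₂ a b ha hb hab
      simp only [Set.mem_setOf_eq] at *
      rw [pairingV_add_right, pairingV_smul_right, pairingV_smul_right]
      have := mul_nonneg ha h₁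
      have := mul_nonneg hb h₂
      linarith
    exact convexHull_min hG hconv hx
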